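/- Let f : X → Y be a continuous surjection between compact Hausdorff spaces. Then f is open if and only if the induced map 2^f : 2^X → 2^Y, K ↦ f[K], is open. -/

import Mathlib

/-- The hyperspace `2^X` of all nonempty closed subsets of `X`. -/
def Hyper (X : Type*) [TopologicalSpace X] : Type _ := {K : Set X // IsClosed K ∧ K.Nonempty}

/-- The Vietoris topology on the hyperspace, generated by the subbasic sets
`{K | K ⊆ U}` and `{K | K ∩ U ≠ ∅}` for `U` open. -/
instance Hyper.instTopologicalSpace (X : Type*) [TopologicalSpace X] :
    TopologicalSpace (Hyper X) :=
  TopologicalSpace.generateFrom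
    ({S | ∃ U : Set X, IsOpen U ∧ S = {K : Hyper X | K.1 ⊆ U}} ∪
     {S | ∃ U : Set X, IsOpen U ∧ S = {K : Hyper X | (K.1 ∩ U).Nonempty}})

/-- The induced map `2^f : 2^X → 2^Y`, `K ↦ f[K]`.  (For closed subsets of a compact
space and continuous `f` into a Hausdorff space the image `f[K]` is closed, so taking
the closure below is redundant and this is indeed `K ↦ f[K]`.) -/
def hyperMap {X Y : Type*} [TopologicalSpace X] [TopologicalSpace Y] (f : X → Y) :
    Hyper X → Hyper Y :=
  fun K => ⟨closure (f '' K.1), isClosed_closure, (K.2.2.image f).closure⟩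

open Set TopologicalSpace

section Aux

variable {X Y : Type*} [TopologicalSpace X] [TopologicalSpace Y]

lemma Hyper.isOpen_sub {U : Set X} (hU : IsOpen U) : IsOpen {K : Hyper X | K.1 ⊆ U} :=
  isOpen_generateFrom_of_mem (Or.inl ⟨U, hU, rfl⟩)

lemma Hyper.isOpen_meet {U : Set X} (hU : IsOpen U) :
    IsOpen {K : Hyper X | (K.1 ∩ U).Nonempty} :=
  isOpen_generateFrom_of_mem (Or.inr ⟨U, hU, rfl⟩)

lemma hyperMap_coe [CompactSpace X] [T2Space Y] {f : X → Y} (hf : Continuous f) (K : Hyper X) :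
    (hyperMap f K).1 = f '' K.1 :=
  ((K.2.1.isCompact.image hf).isClosed).closure_eq

/-- The singleton embedding into the hyperspace is continuous. -/
lemma Hyper.continuous_singleton [T1Space X] :
    @Continuous X (Hyper X) _ (Hyper.instTopologicalSpace X)
      (fun x : X => (⟨{x}, isClosed_singleton, singleton_nonempty x⟩ : Hyper X)) := by
  apply continuous_generateFrom_iff.2
  rintro s (⟨U, hU, rfl⟩ | ⟨U, hU, rfl⟩)
  · convert hU using 1
    ext x
    exact Set.singleton_subset_iff
  · convert hU using 1
    ext x
    exact Set.singleton_inter_nonempty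

/-- Forward direction: if `f` is open then `2^f` is open. -/
theorem isOpenMap_hyperMap {X Y : Type*} [TopologicalSpace X] [CompactSpace X] [T2Space X]
    [TopologicalSpace Y] [T2Space Y]
    {f : X → Y} (hf : Continuous f) (hopen : IsOpenMap f) :
    IsOpenMap (hyperMap f) := by
  classical
  have hbasis := isTopologicalBasis_of_subbasis
    (rfl : (Hyper.instTopologicalSpace X : TopologicalSpace (Hyper X)) = _)
  intro O hO
  rw [isOpen_iff_forall_mem_open]
  rintro L ⟨K, hKO, rfl⟩
  obtain ⟨b, ⟨F, ⟨hFfin, hFsub⟩, rfl⟩, hKb, hbO⟩ := hbasis.exists_subset_of_mem_open hKO hO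
  simp only at hKb hbO
  -- choose, for each subbasic set in `F`, a generating open set
  have hch : ∀ S ∈ F, ∃ U : Set X, IsOpen U ∧
      (S = {K : Hyper X | K.1 ⊆ U} ∨ S = {K : Hyper X | (K.1 ∩ U).Nonempty}) := by
    intro S hS
    rcases hFsub hS with ⟨U, hU, rfl⟩ | ⟨U, hU, rfl⟩
    · exact ⟨U, hU, Or.inl rfl⟩
    · exact ⟨U, hU, Or.inr rfl⟩
  choose! g hg1 hg2 using hch
  set FA : Set (Set (Hyper X)) := {S ∈ F | S = {K : Hyper X | K.1 ⊆ g S}} with hFA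
  set FB : Set (Set (Hyper X)) := F \ FA with hFB
  have hFAsub : FA ⊆ F := fun S hS => hS.1
  have hFBsub : FB ⊆ F := fun S hS => hS.1
  have hFBform : ∀ S ∈ FB, S = {K : Hyper X | (K.1 ∩ g S).Nonempty} := by
    intro S hS
    rcases hg2 S hS.1 with h | h
    · exact absurd ⟨hS.1, h⟩ hS.2
    · exact h
  set U : Set X := ⋂ S ∈ FA, g S with hU
  have hUopen : IsOpen U := (hFfin.subset hFAsub).isOpen_biInter fun S hS => hg1 S (hFAsub hS)
  have hKU : K.1 ⊆ U := by
    apply subset_iInter₂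
    intro S hS
    have hKS : K ∈ S := hKb S (hFAsub hS)
    rw [hS.2] at hKS
    exact hKS
  -- shrink `K ⊆ U`
  obtain ⟨U', hU'open, hKU', hclU'⟩ := normal_exists_closure_subset K.2.1 hUopen hKU
  -- for B-type sets, pick witnesses and shrink
  have hxex : ∀ S ∈ FB, ∃ x, x ∈ K.1 ∧ x ∈ g S := by
    intro S hS
    have hKS : K ∈ S := hKb S (hFBsub hS)
    rw [hFBform S hS] at hKS
    obtain ⟨x, hx1, hx2⟩ := hKS
    exact ⟨x, hx1, hx2⟩
  have hXne : Nonempty X := ⟨K.2.2.choose⟩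
  choose! x hx1 hx2 using hxex
  have hVex : ∀ S ∈ FB, ∃ V : Set X, IsOpen V ∧ x S ∈ V ∧ closure V ⊆ U ∩ g S := by
    intro S hS
    have : ({x S} : Set X) ⊆ U ∩ g S :=
      singleton_subset_iff.2 ⟨hKU (hx1 S hS), hx2 S hS⟩
    obtain ⟨V, hV1, hV2, hV3⟩ := normal_exists_closure_subset isClosed_singleton
      (hUopen.inter (hg1 S (hFBsub hS))) this
    exact ⟨V, hV1, hV2 rfl, hV3⟩
  choose! V hVopen hxV hclV using hVex
  have hFBfin : FB.Finite := hFfin.subset hFBsub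
  -- the big closed set C and open set W'
  set C : Set X := closure U' ∪ ⋃ S ∈ FB, closure (V S) with hC
  have hCclosed : IsClosed C :=
    isClosed_closure.union (hFBfin.isClosed_biUnion fun S _ => isClosed_closure)
  have hCU : C ⊆ U := by
    apply union_subset hclU'
    exact iUnion₂_subset fun S hS => (hclV S hS).trans inter_subset_left
  set W' : Set X := U' ∪ ⋃ S ∈ FB, V S with hW'
  have hW'open : IsOpen W' := hU'open.union (isOpen_biUnion fun S hS => hVopen S hS)
  have hW'C : W' ⊆ C :=
    union_subset_union subset_closure (iUnion₂_mono fun S hS => subset_closure)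
  -- the open neighborhood of `hyperMap f K`
  set W : Set (Hyper Y) := {L' : Hyper Y | L'.1 ⊆ f '' W'} ∩
    ⋂ S ∈ FB, {L' : Hyper Y | (L'.1 ∩ f '' V S).Nonempty} with hWdef
  have hWopen : IsOpen W :=
    (Hyper.isOpen_sub (hopen _ hW'open)).inter
      (hFBfin.isOpen_biInter fun S hS => Hyper.isOpen_meet (hopen _ (hVopen S hS)))
  refine ⟨W, ?_, hWopen, ?_⟩
  · -- W ⊆ hyperMap f '' O
    rintro L' ⟨hL'sub, hL'meet⟩
    simp only [mem_setOf_eq] at hL'sub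
    set K'set : Set X := f ⁻¹' L'.1 ∩ C with hK'set
    have hK'closed : IsClosed K'set := (L'.2.1.preimage hf).inter hCclosed
    have hK'ne : K'set.Nonempty := by
      obtain ⟨y, hy⟩ := L'.2.2
      obtain ⟨xx, hxW', rfl⟩ := hL'sub hy
      exact ⟨xx, hy, hW'C hxW'⟩
    set K' : Hyper X := ⟨K'set, hK'closed, hK'ne⟩ with hK'
    have himg : f '' K'set = L'.1 := by
      apply subset_antisymm
      · rintro _ ⟨xx, ⟨hx1', _⟩, rfl⟩
        exact hx1'
      · intro y hy
        obtain ⟨xx, hxW', rfl⟩ := hL'sub hy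
        exact ⟨xx, ⟨hy, hW'C hxW'⟩, rfl⟩
    have hK'F : K' ∈ ⋂₀ F := by
      intro S hSF
      by_cases hSA : S ∈ FA
      · rw [hSA.2]
        intro z hz
        have : z ∈ U := hCU hz.2
        exact mem_iInter₂.1 this S hSA
      · have hSB : S ∈ FB := ⟨hSF, hSA⟩
        rw [hFBform S hSB]
        have := mem_iInter₂.1 hL'meet S hSB
        obtain ⟨y, hyL, xx, hxV', rfl⟩ := this
        refine ⟨xx, ⟨hyL, ?_⟩, ((hclV S hSB) (subset_closure hxV')).2⟩
        exact Or.inr (mem_biUnion hSB (subset_closure hxV'))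
    refine ⟨K', hbO hK'F, ?_⟩
    apply Subtype.ext
    rw [hyperMap_coe hf]
    exact himg
  · -- hyperMap f K ∈ W
    constructor
    · simp only [mem_setOf_eq, hyperMap_coe hf]
      exact image_mono (hKU'.trans subset_union_left)
    · apply mem_iInter₂.2
      intro S hS
      refine ⟨f (x S), ?_, ⟨x S, hxV S hS, rfl⟩⟩
      rw [hyperMap_coe hf]
      exact ⟨x S, hx1 S hS, rfl⟩

end Aux

/-- Theorem 3. A continuous surjection `f : X → Y` of compact Hausdorff spaces is open
iff the induced map `2^f : 2^X → 2^Y` is open. -/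
theorem isOpenMap_iff_isOpenMap_hyperMap
    {X Y : Type*} [TopologicalSpace X] [CompactSpace X] [T2Space X]
    [TopologicalSpace Y] [CompactSpace Y] [T2Space Y]
    {f : X → Y} (hf : Continuous f) (hsurj : Function.Surjective f) :
    IsOpenMap f ↔ IsOpenMap (hyperMap f) := by
  constructor
  · exact fun h => isOpenMap_hyperMap hf h
  · intro h2 U hU
    rw [isOpen_iff_forall_mem_open]
    rintro _ ⟨x, hxU, rfl⟩
    set sing : Y → Hyper Y :=
      fun y => (⟨{y}, isClosed_singleton, Set.singleton_nonempty y⟩ : Hyper Y) with hsing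
    have hO : IsOpen (hyperMap f '' {K : Hyper X | K.1 ⊆ U}) := h2 _ (Hyper.isOpen_sub hU)
    have hNopen : IsOpen (sing ⁻¹' (hyperMap f '' {K : Hyper X | K.1 ⊆ U})) :=
      hO.preimage Hyper.continuous_singleton
    refine ⟨sing ⁻¹' (hyperMap f '' {K : Hyper X | K.1 ⊆ U}), ?_, hNopen, ?_⟩
    · rintro y ⟨K, hKU, hK⟩
      have : (hyperMap f K).1 = {y} := by rw [hK]
      rw [hyperMap_coe hf] at this
      obtain ⟨x', hx'⟩ := K.2.2
      have : f x' ∈ ({y} : Set Y) := this ▸ Set.mem_image_of_mem f hx'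
      exact ⟨x', hKU hx', this⟩
    · refine ⟨⟨{x}, isClosed_singleton, Set.singleton_nonempty x⟩,
        Set.singleton_subset_iff.2 hxU, ?_⟩
      apply Subtype.ext
      exact (hyperMap_coe hf _).trans Set.image_singleton
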